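/- Let g, g_n : ℝ → (n×n real matrices) be curves differentiable at t₀ with g(t₀) and g_n(t₀) invertible, and suppose g'(t₀) = V̄·g(t₀) and g_n'(t₀) = W̄·g_n(t₀) for n×n real matrices V̄, W̄. Then the right-invariant error ḡ_e(t) := g(t)·g_n(t)⁻¹ is differentiable at t₀ with derivative (V̄ − ḡ_e(t₀)·W̄·ḡ_e(t₀)⁻¹)·ḡ_e(t₀). Equivalently, ḡ̇_e = (V̄ − Ad_{ḡ_e} W̄)·ḡ_e. -/

import Mathlib

/-!
STATEMENT 13: Let g, g_n : ℝ → (n×n real matrices) be curves differentiable at t₀ with g(t₀)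
and g_n(t₀) invertible, and suppose g'(t₀) = V̄·g(t₀) and g_n'(t₀) = W̄·g_n(t₀).  Then the
right-invariant error ḡ_e(t) := g(t)·g_n(t)⁻¹ is differentiable at t₀ with derivative
(V̄ − ḡ_e(t₀)·W̄·ḡ_e(t₀)⁻¹)·ḡ_e(t₀).
-/

open Matrix

attribute [local instance] Matrix.frobeniusNormedAddCommGroup Matrix.frobeniusNormedSpace

attribute [local instance] Matrix.frobeniusNormedRing Matrix.frobeniusNormedAlgebra

theorem right_invariant_error_dynamics
    {n : Type*} [Fintype n] [DecidableEq n]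
    (g gn : ℝ → Matrix n n ℝ) (t₀ : ℝ) (Vb Wb : Matrix n n ℝ)
    (hg : IsUnit (g t₀)) (hgn : IsUnit (gn t₀))
    (hg' : HasDerivAt g (Vb * g t₀) t₀) (hgn' : HasDerivAt gn (Wb * gn t₀) t₀) :
    let ge := g t₀ * (gn t₀)⁻¹
    HasDerivAt (fun t => g t * (gn t)⁻¹) ((Vb - ge * Wb * ge⁻¹) * ge) t₀ := by
  intro ge
  obtain ⟨un, hun⟩ := hgn
  have hinv : HasDerivAt (fun t => (gn t)⁻¹)
      (-((gn t₀)⁻¹ * (Wb * gn t₀) * (gn t₀)⁻¹)) t₀ := by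
    have h1 : HasFDerivAt (fun A : Matrix n n ℝ => Ring.inverse A)
        (-(ContinuousLinearMap.mulLeftRight ℝ (Matrix n n ℝ) ↑un⁻¹ ↑un⁻¹)) (gn t₀) := by
      rw [← hun]; exact hasFDerivAt_ringInverse un
    have h2 := h1.comp_hasDerivAt t₀ hgn'
    simp only [ContinuousLinearMap.neg_apply, ContinuousLinearMap.mulLeftRight_apply] at h2
    have hcoe : (↑un⁻¹ : Matrix n n ℝ) = (gn t₀)⁻¹ := by
      rw [← hun, Matrix.coe_units_inv]
    have : (fun t => (gn t)⁻¹) = fun t => Ring.inverse (gn t) := by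
      funext t; exact Matrix.nonsing_inv_eq_ringInverse _
    rw [this]
    rw [hcoe] at h2
    exact h2
  have hprod := hg'.mul hinv
  convert hprod using 1
  case e'_4 => rfl
  case e'_5 => rfl
  case e'_6 => rfl
  case e'_8 => rfl
  have h1 : gn t₀ * (gn t₀)⁻¹ = 1 := Matrix.mul_nonsing_inv _ ((Matrix.isUnit_iff_isUnit_det _).mp ⟨un, hun⟩)
  have hge : IsUnit ge := hg.mul (Matrix.isUnit_nonsing_inv_iff.mpr ⟨un, hun⟩)
  have h2 : ge⁻¹ * ge = 1 := Matrix.nonsing_inv_mul _ ((Matrix.isUnit_iff_isUnit_det _).mp hge)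
  have key : (gn t₀)⁻¹ * (Wb * gn t₀) * (gn t₀)⁻¹ = (gn t₀)⁻¹ * Wb := by
    rw [show (gn t₀)⁻¹ * (Wb * gn t₀) * (gn t₀)⁻¹ = (gn t₀)⁻¹ * Wb * (gn t₀ * (gn t₀)⁻¹) by
      noncomm_ring, h1, mul_one]
  show (Vb - ge * Wb * ge⁻¹) * ge = _
  rw [key, sub_mul, mul_assoc (ge * Wb), h2, mul_one]
  show Vb * ge - (g t₀ * (gn t₀)⁻¹) * Wb = _
  simp only [ge]
  noncomm_ring
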